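/- Let τ > 0 and let F : ℝ → ℝ satisfy 0 ≤ F(x) ≤ M for all x, with A ≥ 0. If x : [0,T] → ℝ solves x' = -(1/τ + F(x))x + A·F(x) with 0 ≤ x(0) ≤ A, then 0 ≤ x(t) ≤ A for all t ∈ [0,T]. -/

import Mathlib

open Set Filter Topology

/-- If `x` has derivative `d` on `[0,T]`, `d t ≤ 0` whenever `x t ≥ 0`, and `x 0 ≤ 0`,
then `x ≤ 0` on `[0,T]`. -/
theorem ltc_aux (T : ℝ) (x d : ℝ → ℝ)
    (hx : ∀ t ∈ Set.Icc (0:ℝ) T, HasDerivAt x (d t) t)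
    (hd : ∀ t ∈ Set.Icc (0:ℝ) T, 0 ≤ x t → d t ≤ 0)
    (h0 : x 0 ≤ 0) : ∀ t ∈ Set.Icc (0:ℝ) T, x t ≤ 0 := by
  intro t ht
  set f : ℝ → ℝ := fun s => max (x s) 0 with hf_def
  set f' : ℝ → ℝ := fun s => if 0 < x s then d s else 0 with hf'_def
  have key := le_gronwallBound_of_liminf_deriv_right_le (f := f) (f' := f')
      (δ := 0) (K := 0) (ε := 0) (a := 0) (b := T) ?_ ?_ ?_ ?_ t ht
  · have : gronwallBound 0 0 0 (t - 0) = 0 := by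
      rw [gronwallBound_K0]; ring
    have hxf : x t ≤ f t := le_max_left _ _
    linarith [key, hxf, this ▸ key]
  · have hc : ContinuousOn x (Icc 0 T) := fun s hs => (hx s hs).continuousAt.continuousWithinAt
    exact hc.sup continuousOn_const
  · -- liminf slope condition
    intro s hs r hr
    have hsIcc : s ∈ Icc (0:ℝ) T := Ico_subset_Icc_self hs
    have hder := hx s hsIcc
    have hslope : Tendsto (slope x s) (𝓝[>] s) (𝓝 (d s)) :=
      (hasDerivAt_iff_tendsto_slope.mp hder).mono_left
        (nhdsWithin_mono _ (fun z hz => hz.ne'))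
    rcases lt_trichotomy (x s) 0 with hneg | hzero | hpos
    · -- x s < 0 : f is 0 near s
      have hrpos : (0:ℝ) < r := by simpa [hf'_def, not_lt.mpr hneg.le, hneg.not_gt] using hr
      have hev : ∀ᶠ z in 𝓝[>] s, x z < 0 :=
        (hder.continuousAt.eventually (Iio_mem_nhds hneg)).filter_mono nhdsWithin_le_nhds
      apply Filter.Eventually.frequently
      filter_upwards [hev] with z hz
      have : f z = 0 := max_eq_right hz.le
      have hfs : f s = 0 := max_eq_right hneg.le
      rw [this, hfs]
      simpa using hrpos
    · -- x s = 0
      have hds : d s ≤ 0 := hd s hsIcc hzero.ge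
      have hrpos : (0:ℝ) < r := by simpa [hf'_def, hzero] using hr
      have hev : ∀ᶠ z in 𝓝[>] s, slope x s z < r :=
        hslope.eventually (Iio_mem_nhds (lt_of_le_of_lt hds hrpos))
      apply Filter.Eventually.frequently
      filter_upwards [hev, self_mem_nhdsWithin] with z hzslope hzmem
      have hzs : (0:ℝ) < z - s := sub_pos.mpr hzmem
      have hfs : f s = 0 := by simp [hf_def, hzero]
      have hinv : (0:ℝ) ≤ (z - s)⁻¹ := (inv_pos.mpr hzs).le
      have hmax : (z - s)⁻¹ * f z = max ((z - s)⁻¹ * x z) 0 := by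
        rw [hf_def]; simp [mul_max_of_nonneg _ _ hinv]
      rw [hfs, sub_zero, hmax]
      have hslope_eq : (z - s)⁻¹ * x z = slope x s z := by
        rw [slope_def_field, hzero]; field_simp; ring
      rw [hslope_eq]
      exact max_lt hzslope hrpos
    · -- 0 < x s
      have hr' : d s < r := by simpa [hf'_def, hpos] using hr
      have hev0 : ∀ᶠ z in 𝓝[>] s, 0 < x z :=
        (hder.continuousAt.eventually (Ioi_mem_nhds hpos)).filter_mono nhdsWithin_le_nhds
      have hev : ∀ᶠ z in 𝓝[>] s, slope x s z < r := hslope.eventually (Iio_mem_nhds hr')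
      apply Filter.Eventually.frequently
      filter_upwards [hev0, hev, self_mem_nhdsWithin] with z hz0 hzslope hzmem
      have hfz : f z = x z := max_eq_left hz0.le
      have hfs : f s = x s := max_eq_left hpos.le
      rw [hfz, hfs]
      have : (z - s)⁻¹ * (x z - x s) = slope x s z := by
        rw [slope_def_field]; ring
      rw [this]; exact hzslope
  · exact max_le h0 le_rfl
  · intro s hs
    have : f' s ≤ 0 := by
      simp only [hf'_def]
      split_ifs with h
      · exact hd s (Ico_subset_Icc_self hs) h.le
      · exact le_rfl
    have hfnn : 0 ≤ f s := le_max_right _ _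
    linarith

/-- Forward invariance of `[0, A]` for the scalar LTC equation with
`0 ≤ F ≤ M` and `A ≥ 0`. -/
theorem stmt_2 (τ A M T : ℝ) (hτ : 0 < τ) (hA : 0 ≤ A) (hT : 0 ≤ T)
    (F : ℝ → ℝ) (hF : ∀ x, 0 ≤ F x ∧ F x ≤ M)
    (x : ℝ → ℝ)
    (hx : ∀ t ∈ Set.Icc (0 : ℝ) T,
      HasDerivAt x (-(1 / τ + F (x t)) * x t + A * F (x t)) t)
    (h0 : 0 ≤ x 0) (h0' : x 0 ≤ A) :
    ∀ t ∈ Set.Icc (0 : ℝ) T, 0 ≤ x t ∧ x t ≤ A := by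
  have hτ' : 0 < 1 / τ := by positivity
  -- lower bound: apply aux to -x
  have hlow := ltc_aux T (fun s => -x s)
      (fun s => -(-(1 / τ + F (x s)) * x s + A * F (x s)))
      (fun s hs => (hx s hs).neg)
      (fun s hs hxs => by
        have h1 := (hF (x s)).1
        have hxs' : x s ≤ 0 := by linarith [neg_nonneg.mp hxs]
        nlinarith [mul_nonneg h1 hA, mul_nonpos_of_nonneg_of_nonpos h1 hxs',
          mul_nonpos_of_nonneg_of_nonpos hτ'.le hxs'])
      (by simpa using h0)
  -- upper bound: apply aux to x - A
  have hup := ltc_aux T (fun s => x s - A)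
      (fun s => -(1 / τ + F (x s)) * x s + A * F (x s))
      (fun s hs => (hx s hs).sub_const A)
      (fun s hs hxs => by
        have h1 := (hF (x s)).1
        have hxs' : A ≤ x s := by linarith
        have hxnn : 0 ≤ x s := le_trans hA hxs'
        nlinarith [mul_nonneg h1 (sub_nonneg.mpr hxs'),
          mul_nonneg hτ'.le hxnn])
      (by simpa using h0')
  intro t ht
  constructor
  · have := hlow t ht; simpa using this
  · have := hup t ht; linarith
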